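/- arXiv:2207.13039 — 2 statements merged into one kernel-verified Lean document; each statement's English description precedes it below -/
import Mathlib

section
/- Let $A=[a_{i,j}]_{1\le i,j\le 2m}$ be a skew-symmetric matrix of even order over a commutative ring (i.e. $a_{j,i}=-a_{i,j}$ for all $i,j$) such that $a_{i,j}=0$ whenever $i+j$ is an even number greater than two. Then $\det(A)=\left(\det[a_{2i,2j-1}]_{1\le i,j\le m}\right)^2$. -/
open Equiv Matrix

/-- The interleaving equivalence: `inl i ↦ 2i`, `inr i ↦ 2i+1`. -/
def evenOddEquiv (m : ℕ) : (Fin m ⊕ Fin m) ≃ Fin (2 * m) where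
  toFun x := Sum.elim (fun i : Fin m => (⟨2 * i, by omega⟩ : Fin (2 * m)))
    (fun i : Fin m => ⟨2 * i + 1, by omega⟩) x
  invFun k := if h : (k : ℕ) % 2 = 0 then Sum.inl ⟨(k : ℕ) / 2, by omega⟩
    else Sum.inr ⟨(k : ℕ) / 2, by omega⟩
  left_inv x := by
    rcases x with i | i
    · dsimp only [Sum.elim_inl]
      rw [dif_pos (by omega)]
      exact congrArg Sum.inl (Fin.ext (by simp))
    · dsimp only [Sum.elim_inr]
      rw [dif_neg (by omega)]
      exact congrArg Sum.inr (Fin.ext (by simp; omega))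
  right_inv k := by
    dsimp only
    by_cases h : (k : ℕ) % 2 = 0
    · rw [dif_pos h]; exact Fin.ext (by simp; omega)
    · rw [dif_neg h]; exact Fin.ext (by simp; omega)

lemma sign_sumComm_fin (m : ℕ) :
    Equiv.Perm.sign (Equiv.sumComm (Fin m) (Fin m)) = (-1) ^ m := by
  let e : (Fin m ⊕ Fin m) ≃ Fin m × Fin 2 :=
    { toFun := Sum.elim (fun i => (i, 0)) (fun i => (i, 1))
      invFun := fun p => if p.2 = 0 then Sum.inl p.1 else Sum.inr p.1
      left_inv := by rintro (i | i) <;> simp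
      right_inv := by
        rintro ⟨i, j⟩
        fin_cases j <;> simp }
  have h := Equiv.Perm.sign_eq_sign_of_equiv (Equiv.sumComm (Fin m) (Fin m))
    (Equiv.prodCongrRight fun _ : Fin m => Equiv.swap (0 : Fin 2) 1) e ?_
  · rw [h, Equiv.Perm.sign_prodCongrRight]
    simp [Equiv.Perm.sign_swap (by decide : (0 : Fin 2) ≠ 1)]
  · rintro (i | i) <;> simp [e]

/-- If `A = [a_{i,j}]_{1 ≤ i,j ≤ 2m}` (rows/columns indexed `1..2m`, realized as
`Fin (2m)` with `i` standing for the `(i+1)`-st row/column) is a skew-symmetric matrix over a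
commutative ring with `a_{i,j} = 0` whenever `i + j` is an even number greater than two, then
`det(A) = (det[a_{2i,2j-1}]_{1≤i,j≤m})^2`. -/
theorem stmt9 {R : Type*} [CommRing R] (m : ℕ)
    (A : Matrix (Fin (2 * m)) (Fin (2 * m)) R)
    (hskew : ∀ i j : Fin (2 * m), A j i = -A i j)
    (hA : ∀ i j : Fin (2 * m), Even (((i : ℕ) + 1) + ((j : ℕ) + 1)) →
      ((i : ℕ) + 1) + ((j : ℕ) + 1) > 2 → A i j = 0) :
    A.det =
      (Matrix.of fun i j : Fin m =>
          A ⟨2 * (i : ℕ) + 1, by have := i.isLt; omega⟩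
            ⟨2 * (j : ℕ), by have := j.isLt; omega⟩).det ^ 2 := by
  classical
  let e := evenOddEquiv m
  let B : Matrix (Fin m) (Fin m) R := Matrix.of fun i j : Fin m =>
    A ⟨2 * (i : ℕ) + 1, by have := i.isLt; omega⟩ ⟨2 * (j : ℕ), by have := j.isLt; omega⟩
  let f : (Fin m ⊕ Fin m) ≃ Fin (2 * m) := (Equiv.sumComm (Fin m) (Fin m)).trans e
  let C : Matrix (Fin m) (Fin m) R := Matrix.of fun i j : Fin m =>
    A ⟨2 * (i : ℕ), by have := i.isLt; omega⟩ ⟨2 * (j : ℕ), by have := j.isLt; omega⟩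
  have hblock : A.submatrix f e = Matrix.fromBlocks B 0 C (-Bᵀ) := by
    ext x y
    rcases x with i | i <;> rcases y with j | j
    · rfl
    · show A ⟨2 * (i : ℕ) + 1, by have := i.isLt; omega⟩
          ⟨2 * (j : ℕ) + 1, by have := j.isLt; omega⟩ = (0 : Matrix (Fin m) (Fin m) R) i j
      rw [Matrix.zero_apply]
      exact hA _ _ ⟨(i : ℕ) + (j : ℕ) + 2, by simp; omega⟩ (by simp; omega)
    · rfl
    · show A _ _ = (-Bᵀ) i j
      rw [Matrix.neg_apply, Matrix.transpose_apply]
      exact hskew _ _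
  have hsub : A.submatrix f e = (A.submatrix e e).submatrix
      (Equiv.sumComm (Fin m) (Fin m) : Equiv.Perm (Fin m ⊕ Fin m)) id := rfl
  have hdet1 : (A.submatrix f e).det = (-1 : R) ^ m * A.det := by
    rw [hsub, Matrix.det_permute, sign_sumComm_fin, Matrix.det_submatrix_equiv_self]
    push_cast
    ring
  have hdet2 : (A.submatrix f e).det = (-1 : R) ^ m * B.det ^ 2 := by
    rw [hblock, Matrix.det_fromBlocks_zero₁₂, Matrix.det_neg, Matrix.det_transpose]
    rw [Fintype.card_fin]
    ring
  have key : (-1 : R) ^ m * A.det = (-1 : R) ^ m * B.det ^ 2 := by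
    rw [← hdet1, hdet2]
  have h2 := congrArg (fun x => (-1 : R) ^ m * x) key
  simp only [← mul_assoc, ← pow_add, ← two_mul, pow_mul, neg_one_sq, one_pow, one_mul] at h2
  exact h2
end

section
/- Let $p>3$ be a prime with $p\equiv 1\pmod{12}$ or $p\equiv 11\pmod{12}$. Then $D_p(6,6)\equiv 0\pmod p$. -/
/-- `D_p(c,d)`: the determinant of the `(p-1) × (p-1)` integer matrix with `(i,j)` entry
`(i² + c·i·j + d·j²)^(p-2)` for `1 ≤ i, j ≤ p-1`. -/
def Dp (p : ℕ) (c d : ℤ) : ℤ :=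
  (Matrix.of fun i j : Fin (p - 1) =>
    (((i : ℕ) + 1 : ℤ) ^ 2 + c * ((i : ℕ) + 1 : ℤ) * ((j : ℕ) + 1 : ℤ)
      + d * ((j : ℕ) + 1 : ℤ) ^ 2) ^ (p - 2)).det

section Aux

variable {p : ℕ} [Fact p.Prime]

/-- In `ZMod p`, `x ^ (p - 2) = x⁻¹` (for `p > 2`). -/
lemma pow_sub_two_eq_inv (hp2 : 2 < p) (x : ZMod p) : x ^ (p - 2) = x⁻¹ := by
  rcases eq_or_ne x 0 with rfl | hx
  · rw [zero_pow (by omega), inv_zero]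
  · have h1 : x ^ (p - 2) * x = 1 := by
      have : x ^ (p - 2) * x = x ^ (p - 1) := by
        rw [← pow_succ]; congr 1; omega
      rw [this, ZMod.pow_card_sub_one_eq_one hx]
    exact eq_inv_of_mul_eq_one_left h1

lemma sum_univ_zmod_eq_zero (hp2 : 2 < p) : (∑ x : ZMod p, x) = 0 := by
  have h : (∑ x : ZMod p, x) = ∑ x : ZMod p, (-x) :=
    (Fintype.sum_bijective (fun x => -x) (neg_involutive.bijective) _ _ (fun x => rfl)).symm
  have h2 : (2 : ZMod p) * (∑ x : ZMod p, x) = 0 := by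
    rw [two_mul]; nth_rewrite 2 [h]; rw [← Finset.sum_add_distrib]; simp
  have h2' : (2 : ZMod p) ≠ 0 := by
    have : ¬ (p ∣ 2) := fun hd => by have := Nat.le_of_dvd (by norm_num) hd; omega
    simpa [ZMod.natCast_eq_zero_iff] using
      (by exact_mod_cast (ZMod.natCast_eq_zero_iff 2 p).not.mpr this :
        ((2 : ℕ) : ZMod p) ≠ 0)
  exact (mul_eq_zero.mp h2).resolve_left h2'

lemma sum_univ_zmod_inv_eq_zero (hp2 : 2 < p) : (∑ x : ZMod p, x⁻¹) = 0 := by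
  have h : (∑ x : ZMod p, x⁻¹) = ∑ x : ZMod p, x :=
    Fintype.sum_bijective (fun x => x⁻¹) (inv_involutive.bijective) _ _ (fun x => by simp)
  rw [h]; exact sum_univ_zmod_eq_zero hp2

lemma sum_univ_zmod_shift_inv_eq_zero (hp2 : 2 < p) (c : ZMod p) :
    (∑ x : ZMod p, (x - c)⁻¹) = 0 := by
  have h : (∑ x : ZMod p, x⁻¹) = ∑ x : ZMod p, (x - c)⁻¹ :=
    Fintype.sum_bijective (fun x => x + c) (Equiv.addRight c).bijective _ _
      (fun x => by simp)
  rw [← h]; exact sum_univ_zmod_inv_eq_zero hp2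

/-- Core partial fraction sum: for `δ ≠ 0`,
`∑ u, (u * (u - δ))⁻¹ = 2 * δ⁻¹ * δ⁻¹`. -/
lemma sum_inv_mul (hp2 : 2 < p) {δ : ZMod p} (hδ : δ ≠ 0) :
    (∑ u : ZMod p, (u * (u - δ))⁻¹) = 2 * δ⁻¹ * δ⁻¹ := by
  have key : ∀ u : ZMod p, (u * (u - δ))⁻¹ =
      δ⁻¹ * ((u - δ)⁻¹ - u⁻¹)
      + (if u = 0 then δ⁻¹ * δ⁻¹ else 0) + (if u = δ then δ⁻¹ * δ⁻¹ else 0) := by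
    intro u
    rcases eq_or_ne u 0 with rfl | hu0
    · rw [zero_mul, zero_sub, inv_neg, inv_zero, if_pos rfl, if_neg (Ne.symm hδ)]
      ring
    · rcases eq_or_ne u δ with rfl | huδ
      · rw [sub_self, mul_zero, inv_zero, if_neg hδ, if_pos rfl]
        ring
      · have huδ' : u - δ ≠ 0 := sub_ne_zero.mpr huδ
        simp only [if_neg hu0, if_neg huδ, add_zero]
        field_simp
        ring
  rw [Finset.sum_congr rfl (fun u _ => key u)]
  rw [Finset.sum_add_distrib, Finset.sum_add_distrib, ← Finset.mul_sum]
  rw [Finset.sum_ite_eq' Finset.univ (0 : ZMod p) (fun _ => δ⁻¹ * δ⁻¹),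
    Finset.sum_ite_eq' Finset.univ δ (fun _ => δ⁻¹ * δ⁻¹)]
  simp only [Finset.mem_univ, if_true]
  have : (∑ u : ZMod p, ((u - δ)⁻¹ - u⁻¹)) = 0 := by
    rw [Finset.sum_sub_distrib, sum_univ_zmod_shift_inv_eq_zero hp2,
      sum_univ_zmod_inv_eq_zero hp2, sub_zero]
  rw [this, mul_zero]
  ring

/-- The main sum: given a square root of `3`, `∑ t, (6t² + 6t + 1)⁻¹ = 1`. -/
lemma main_sum (hp3 : 3 < p) {s : ZMod p} (hs : s * s = 3) :
    (∑ t : ZMod p, (6 * t ^ 2 + 6 * t + 1)⁻¹) = 1 := by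
  have hp2 : 2 < p := by omega
  have hndvd : ¬ (p ∣ 6) := by
    intro hd
    have h1 := Nat.le_of_dvd (by norm_num) hd
    have hpp := (Fact.out : p.Prime)
    interval_cases p
    · norm_num at hd
    · norm_num at hd
    · norm_num at hpp
  have h6 : (6 : ZMod p) ≠ 0 := by
    intro h
    exact hndvd ((ZMod.natCast_eq_zero_iff 6 p).mp (by exact_mod_cast h))
  have h2 : (2 : ZMod p) ≠ 0 := fun h =>
    h6 (by rw [show (6 : ZMod p) = 2 * 3 by norm_num, h, zero_mul])
  have h3 : (3 : ZMod p) ≠ 0 := fun h =>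
    h6 (by rw [show (6 : ZMod p) = 2 * 3 by norm_num, h, mul_zero])
  have hs2 : s ^ 2 = 3 := by rw [sq]; exact hs
  have hs0 : s ≠ 0 := fun h => h3 (by rw [← hs, h, mul_zero])
  set α : ZMod p := (-s - 3) / 6 with hα
  set δ : ZMod p := s / 3 with hδdef
  have hδ : δ ≠ 0 := div_ne_zero hs0 h3
  have hfact : ∀ t : ZMod p, 6 * t ^ 2 + 6 * t + 1 = 6 * ((t - α) * ((t - α) - δ)) := by
    intro t
    rw [hα, hδdef]
    field_simp
    ring_nf
    rw [hs2]
    ring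
  calc (∑ t : ZMod p, (6 * t ^ 2 + 6 * t + 1)⁻¹)
      = ∑ t : ZMod p, (6 * ((t - α) * ((t - α) - δ)))⁻¹ := by
        exact Finset.sum_congr rfl (fun t _ => by rw [hfact t])
    _ = ∑ u : ZMod p, (6 * (u * (u - δ)))⁻¹ := by
        exact (Fintype.sum_bijective (fun u => u + α) (Equiv.addRight α).bijective _ _
          (fun u => by simp)).symm
    _ = ∑ u : ZMod p, 6⁻¹ * (u * (u - δ))⁻¹ := by
        exact Finset.sum_congr rfl (fun u _ => by rw [mul_inv])
    _ = 6⁻¹ * (2 * δ⁻¹ * δ⁻¹) := by rw [← Finset.mul_sum, sum_inv_mul hp2 hδ]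
    _ = 1 := by
        rw [hδdef]
        field_simp
        ring_nf
        rw [hs2]
        ring

end Aux

/-- `3` is a square mod `p` when `p ≡ ±1 (mod 12)`. -/
lemma three_is_square {p : ℕ} [Fact p.Prime] (hp3 : 3 < p)
    (hp12 : p % 12 = 1 ∨ p % 12 = 11) : IsSquare (3 : ZMod p) := by
  have hns : ¬ IsSquare (((2 : ℕ) : ℤ) : ZMod 3) := by decide
  haveI : Fact (Nat.Prime 3) := ⟨by norm_num⟩
  have hp2 : p ≠ 2 := by omega
  have hqr := legendreSym.quadratic_reciprocity' (p := 3) (q := p) (by norm_num) hp2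
  norm_num at hqr
  have hmod : legendreSym 3 (p : ℤ) = legendreSym 3 ((p % 3 : ℕ) : ℤ) := by
    rw [legendreSym.mod]
    congr 1
  have h3ne : ((3 : ℤ) : ZMod p) ≠ 0 := by
    intro h
    have hd : (p : ℤ) ∣ 3 := (ZMod.intCast_zmod_eq_zero_iff_dvd 3 p).mp h
    have hd' : p ∣ 3 := by exact_mod_cast hd
    have := Nat.le_of_dvd (by norm_num) hd'
    omega
  have h1 : legendreSym p 3 = 1 := by
    rcases hp12 with h12 | h12
    · have h31 : p % 3 = 1 := by omega
      have hev : ((-1 : ℤ)) ^ (p / 2) = 1 := Even.neg_one_pow (Nat.even_iff.mpr (by omega))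
      rw [hqr, hmod, h31, hev]
      norm_num
    · have h32 : p % 3 = 2 := by omega
      have hod : ((-1 : ℤ)) ^ (p / 2) = -1 := Odd.neg_one_pow (Nat.odd_iff.mpr (by omega))
      have h2n : legendreSym 3 ((2 : ℕ) : ℤ) = -1 :=
        (legendreSym.eq_neg_one_iff 3 (a := ((2 : ℕ) : ℤ))).mpr hns
      rw [hqr, hmod, h32, hod, h2n]
      norm_num
  have := (legendreSym.eq_one_iff p (a := 3) h3ne).mp h1
  have hc : ((3 : ℤ) : ZMod p) = (3 : ZMod p) := by push_cast; ring
  rwa [hc] at this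

/-- Each row sum of the matrix vanishes mod `p`. -/
lemma row_sum {p : ℕ} [Fact p.Prime] (hp3 : 3 < p) (hsq : IsSquare (3 : ZMod p))
    (c : ZMod p) (hc : c ≠ 0) :
    ∑ j : Fin (p - 1), (c ^ 2 + 6 * c * (((j : ℕ) : ZMod p) + 1)
      + 6 * (((j : ℕ) : ZMod p) + 1) ^ 2) ^ (p - 2) = 0 := by
  have hp2 : 2 < p := by omega
  obtain ⟨s, hs⟩ := hsq
  have hsum1 := main_sum hp3 hs.symm
  -- F is the summand as a function of the second variable
  set F : ZMod p → ZMod p := fun x => (c ^ 2 + 6 * c * x + 6 * x ^ 2)⁻¹ with hF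
  have hstep1 : (∑ j : Fin (p - 1), (c ^ 2 + 6 * c * (((j : ℕ) : ZMod p) + 1)
      + 6 * (((j : ℕ) : ZMod p) + 1) ^ 2) ^ (p - 2))
      = ∑ j : Fin (p - 1), F (((j : ℕ) : ZMod p) + 1) := by
    refine Finset.sum_congr rfl fun j _ => ?_
    rw [pow_sub_two_eq_inv hp2]
  -- reindex over nonzero elements of ZMod p
  have hstep2 : (∑ j : Fin (p - 1), F (((j : ℕ) : ZMod p) + 1))
      = ∑ x ∈ Finset.univ.erase (0 : ZMod p), F x := by
    refine Finset.sum_nbij' (fun j : Fin (p - 1) => ((((j : ℕ) + 1 : ℕ)) : ZMod p))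
      (fun x : ZMod p => ⟨x.val - 1, by
        have h1 : x.val < p := ZMod.val_lt x
        omega⟩) ?_ ?_ ?_ ?_ ?_
    · intro j _
      simp only [Finset.mem_erase, Finset.mem_univ, and_true]
      intro h
      have hd := (ZMod.natCast_eq_zero_iff _ p).mp h
      have hj := j.2
      have := Nat.le_of_dvd (by omega) hd
      omega
    · intro x _
      exact Finset.mem_univ _
    · intro j _
      have hj := j.2
      have hv : ((((j : ℕ) + 1 : ℕ)) : ZMod p).val = (j : ℕ) + 1 :=
        ZMod.val_cast_of_lt (by omega)
      ext
      show ((((j : ℕ) + 1 : ℕ)) : ZMod p).val - 1 = (j : ℕ)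
      rw [hv]
      omega
    · intro x hx
      have hx0 : x ≠ 0 := (Finset.mem_erase.mp hx).1
      have h1 : x.val - 1 + 1 = x.val := by
        have hv : x.val ≠ 0 := by
          intro h
          apply hx0
          have h2 := ZMod.natCast_rightInverse (n := p) x
          rw [← h2, h]
          exact Nat.cast_zero
        omega
      show (((x.val - 1 + 1 : ℕ)) : ZMod p) = x
      rw [h1]
      exact ZMod.natCast_rightInverse x
    · intro j _
      congr 1
      push_cast
      ring
  -- sum over all of ZMod p minus the value at 0
  have hstep3 : (∑ x ∈ Finset.univ.erase (0 : ZMod p), F x)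
      = (∑ x : ZMod p, F x) - F 0 := by
    have := Finset.add_sum_erase Finset.univ F (Finset.mem_univ (0 : ZMod p))
    rw [← this]
    ring
  -- compute the full sum by substituting x = c * t
  have hstep4 : (∑ x : ZMod p, F x) = (c ^ 2)⁻¹ := by
    have hbij : (∑ x : ZMod p, F x) = ∑ t : ZMod p, F (c * t) := by
      exact (Fintype.sum_bijective (fun t => c * t) (Equiv.mulLeft₀ c hc).bijective _ _
        (fun t => rfl)).symm
    rw [hbij]
    have heq : ∀ t : ZMod p, F (c * t) = (c ^ 2)⁻¹ * (6 * t ^ 2 + 6 * t + 1)⁻¹ := by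
      intro t
      rw [hF]
      simp only []
      rw [← mul_inv]
      congr 1
      ring
    rw [Finset.sum_congr rfl fun t _ => heq t, ← Finset.mul_sum, hsum1, mul_one]
  have hF0 : F 0 = (c ^ 2)⁻¹ := by simp [hF]
  rw [hstep1, hstep2, hstep3, hstep4, hF0, sub_self]

/-- For any prime `p > 3` with `p ≡ ±1 (mod 12)`, `D_p(6, 6) ≡ 0 (mod p)`. -/
theorem stmt15 (p : ℕ) (hp : p.Prime) (hp3 : 3 < p) (hp12 : p % 12 = 1 ∨ p % 12 = 11) :
    (p : ℤ) ∣ Dp p 6 6 := by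
  haveI : Fact p.Prime := ⟨hp⟩
  rw [← ZMod.intCast_zmod_eq_zero_iff_dvd]
  have hdet : ((Dp p 6 6 : ℤ) : ZMod p)
      = (Matrix.of fun i j : Fin (p - 1) =>
          ((((i : ℕ) : ZMod p) + 1) ^ 2 + 6 * (((i : ℕ) : ZMod p) + 1) * (((j : ℕ) : ZMod p) + 1)
            + 6 * (((j : ℕ) : ZMod p) + 1) ^ 2) ^ (p - 2)).det := by
    rw [Dp]
    have h2 : ((Matrix.of fun i j : Fin (p - 1) =>
        (((i : ℕ) + 1 : ℤ) ^ 2 + 6 * ((i : ℕ) + 1 : ℤ) * ((j : ℕ) + 1 : ℤ)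
          + 6 * ((j : ℕ) + 1 : ℤ) ^ 2) ^ (p - 2)).map (Int.castRingHom (ZMod p))).det
        = (Matrix.of fun i j : Fin (p - 1) =>
          ((((i : ℕ) : ZMod p) + 1) ^ 2 + 6 * (((i : ℕ) : ZMod p) + 1) * (((j : ℕ) : ZMod p) + 1)
            + 6 * (((j : ℕ) : ZMod p) + 1) ^ 2) ^ (p - 2)).det := by
      congr 1
      ext i j
      simp only [Matrix.map_apply, Matrix.of_apply, Int.coe_castRingHom]
      push_cast
      ring
    exact (RingHom.map_det (Int.castRingHom (ZMod p)) _).trans h2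
  rw [hdet]
  rw [← Matrix.exists_mulVec_eq_zero_iff]
  refine ⟨fun _ => 1, ?_, ?_⟩
  · intro h
    exact one_ne_zero (congrFun h ⟨0, by omega⟩)
  · funext i
    have hc : (((i : ℕ) : ZMod p) + 1) ≠ 0 := by
      intro h
      have h' : ((((i : ℕ) + 1 : ℕ)) : ZMod p) = 0 := by push_cast; exact h
      have hd := (ZMod.natCast_eq_zero_iff _ p).mp h'
      have hi := i.2
      have := Nat.le_of_dvd (by omega) hd
      omega
    have := row_sum hp3 (three_is_square hp3 hp12) _ hc
    simp only [Matrix.mulVec, dotProduct, Matrix.of_apply, mul_one, Pi.zero_apply]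
    exact this
end
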